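/- Bibasic generalization of Entry 1.4.11: Let q, h, t be complex numbers with |q^h| < 1, |q^t| < 1, |q^{ht}| < 1 and |(q^t)^2| < 1 (principal complex powers), such that all denominators below are nonzero. Then ∑_{j=0}^∞ (q^t)^{2j} / [(q^t;q^t)_j · (q^h;q^h)_{tj}] = [1 / ((q^t;q^t)_∞ (q^h;q^h)_∞)] · ∑_{k=0}^∞ [(q^t;q^t)_{hk+1} / (q^h;q^h)_k] · (−1)^k · (q^h)^{k(k+1)/2}. -/

import Mathlib

open Complex Filter Topology


open Complex

/-- Finite q-Pochhammer symbol `(A;Q)_k = ∏_{r=0}^{k-1} (1 - A Q^r)`. -/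
noncomputable def qp (A Q : ℂ) (k : ℕ) : ℂ := ∏ r ∈ Finset.range k, (1 - A * Q ^ r)

/-- Infinite q-Pochhammer symbol `(A;Q)_∞ = ∏_{r=0}^{∞} (1 - A Q^r)`. -/
noncomputable def qpInf (A Q : ℂ) : ℂ := ∏' r : ℕ, (1 - A * Q ^ r)

/-- q-Pochhammer symbol with (possibly non-integer) index:
`(A;Q)_{c k} := (A;Q)_∞ / (A R^k;Q)_∞` where `R = Q^c`. -/
noncomputable def qpc (A Q R : ℂ) (k : ℕ) : ℂ := qpInf A Q / qpInf (A * R ^ k) Q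

/-- q-Pochhammer symbol with shifted (possibly non-integer) index:
`(A;Q)_{c k + 1} := (A;Q)_∞ / (A Q R^k;Q)_∞` where `R = Q^c`. -/
noncomputable def qpc1 (A Q R : ℂ) (k : ℕ) : ℂ := qpInf A Q / qpInf (A * Q * R ^ k) Q

lemma qp_succ (A Q : ℂ) (n : ℕ) : qp A Q (n + 1) = qp A Q n * (1 - A * Q ^ n) :=
  Finset.prod_range_succ _ _

lemma multipliable_qp {Q : ℂ} (hQ : ‖Q‖ < 1) (A : ℂ) :
    Multipliable (fun r : ℕ => 1 - A * Q ^ r) := by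
  have h0 : Tendsto (fun r : ℕ => ‖A * Q ^ r‖) atTop (𝓝 0) := by
    simpa using ((tendsto_pow_atTop_nhds_zero_of_norm_lt_one hQ).const_mul A).norm
  have h1 : ∀ᶠ r in atTop, ‖A * Q ^ r‖ ≤ 1/2 :=
    h0.eventually_le_const (by norm_num)
  obtain ⟨N, hN⟩ := eventually_atTop.mp h1
  apply Multipliable.comp_nat_add (k := N)
  have key := Complex.multipliable_of_summable_log (f := fun n => 1 - A * Q ^ (n + N))
    (by
      apply Summable.of_norm_bounded (g := fun n => 3/2 * (‖A‖ * ‖Q‖ ^ N) * ‖Q‖ ^ n)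
      · exact ((summable_geometric_of_lt_one (norm_nonneg Q) hQ).mul_left _)
      · intro n
        have h2 : ‖A * Q ^ (n + N)‖ ≤ 1/2 := hN (n + N) (Nat.le_add_left _ _)
        have h3 : ‖Complex.log (1 + -(A * Q ^ (n + N)))‖ ≤ 3/2 * ‖-(A * Q ^ (n + N))‖ :=
          Complex.norm_log_one_add_half_le_self (by simpa using h2)
        have h4 : (1 : ℂ) + -(A * Q ^ (n + N)) = 1 - A * Q ^ (n + N) := by ring
        rw [h4] at h3
        refine h3.trans ?_
        rw [norm_neg, norm_mul, norm_pow, pow_add]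
        ring_nf
        nlinarith [norm_nonneg A, pow_nonneg (norm_nonneg Q) n, pow_nonneg (norm_nonneg Q) N])
  exact key

lemma tendsto_qp {Q : ℂ} (hQ : ‖Q‖ < 1) (A : ℂ) :
    Tendsto (fun N => qp A Q N) atTop (𝓝 (qpInf A Q)) :=
  (multipliable_qp hQ A).hasProd.tendsto_prod_nat

lemma inv_qp_bound {Q : ℂ} (hQ : ‖Q‖ < 1) (hne : ∀ n, qp Q Q n ≠ 0) (hInf : qpInf Q Q ≠ 0) :
    ∃ C : ℝ, 0 < C ∧ ∀ n, ‖(qp Q Q n)⁻¹‖ ≤ C := by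
  have ht : Tendsto (fun n => ‖(qp Q Q n)⁻¹‖) atTop (𝓝 ‖(qpInf Q Q)⁻¹‖) :=
    ((tendsto_qp hQ Q).inv₀ hInf).norm
  obtain ⟨C, hC⟩ := ht.bddAbove_range
  exact ⟨max C 1, lt_of_lt_of_le one_pos (le_max_right _ _),
    fun n => le_trans (hC ⟨n, rfl⟩) (le_max_left _ _)⟩

lemma one_sub_pow_ne {Q : ℂ} (hne : ∀ n, qp Q Q n ≠ 0) (n : ℕ) :
    (1 : ℂ) - Q ^ (n + 1) ≠ 0 := by
  intro h
  apply hne (n + 1)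
  rw [qp_succ]
  have : Q * Q ^ n = Q ^ (n + 1) := (pow_succ' Q n).symm
  rw [this, h, mul_zero]
lemma sum_summable' {a : ℕ → ℂ} {C : ℝ} (hC : ∀ n, ‖a n‖ ≤ C) {z : ℂ} (hz : ‖z‖ < 1) :
    Summable fun n => a n * z ^ n := by
  refine Summable.of_norm_bounded (g := fun n => C * ‖z‖ ^ n)
    ((summable_geometric_of_lt_one (norm_nonneg z) hz).mul_left C) fun n => ?_
  rw [norm_mul, norm_pow]
  exact mul_le_mul_of_nonneg_right (hC n) (pow_nonneg (norm_nonneg z) n)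

lemma tsum_shift_bound {a : ℕ → ℂ} {C : ℝ} (hC : ∀ n, ‖a n‖ ≤ C) {w : ℂ} (hw : ‖w‖ ≤ 1/2) :
    ‖(∑' n, a n * w ^ n) - a 0‖ ≤ 2 * C * ‖w‖ := by
  have hw1 : ‖w‖ < 1 := lt_of_le_of_lt hw (by norm_num)
  have hs := sum_summable' hC hw1
  rw [Summable.tsum_eq_zero_add hs]
  simp only [pow_zero, mul_one, add_sub_cancel_left]
  have hb : ∀ n : ℕ, ‖a (n + 1) * w ^ (n + 1)‖ ≤ (C * ‖w‖) * (1/2) ^ n := by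
    intro n
    rw [norm_mul, norm_pow, pow_succ']
    calc ‖a (n+1)‖ * (‖w‖ * ‖w‖ ^ n) ≤ C * (‖w‖ * (1/2) ^ n) := by
          apply mul_le_mul (hC _) (mul_le_mul_of_nonneg_left
            (pow_le_pow_left₀ (norm_nonneg w) hw n) (norm_nonneg w))
            (by positivity) (le_trans (norm_nonneg _) (hC 0))
      _ = (C * ‖w‖) * (1/2) ^ n := by ring
  have hgs : HasSum (fun n : ℕ => (C * ‖w‖) * (1/2) ^ n) (2 * C * ‖w‖) := by
    have := (hasSum_geometric_of_lt_one (by norm_num : (0:ℝ) ≤ 1/2) (by norm_num)).mul_left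
      (C * ‖w‖)
    convert this using 1
    norm_num
    · rfl
    · rw [show (1:ℝ) - 1/2 = 2⁻¹ by norm_num, inv_inv]; ring
  exact tsum_of_norm_bounded hgs hb

lemma tendsto_tsum_one {a : ℕ → ℂ} {C : ℝ} (hC : ∀ n, ‖a n‖ ≤ C) (ha0 : a 0 = 1) {Q z : ℂ}
    (hQ : ‖Q‖ < 1) :
    Tendsto (fun N : ℕ => ∑' n, a n * (Q ^ N * z) ^ n) atTop (𝓝 1) := by
  have hwn : Tendsto (fun N : ℕ => ‖Q ^ N * z‖) atTop (𝓝 0) := by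
    simpa using ((tendsto_pow_atTop_nhds_zero_of_norm_lt_one hQ).mul_const z).norm
  have hev : ∀ᶠ N in atTop, ‖Q ^ N * z‖ ≤ 1/2 := hwn.eventually_le_const (by norm_num)
  have key : Tendsto (fun N : ℕ => (∑' n, a n * (Q ^ N * z) ^ n) - 1) atTop (𝓝 0) := by
    refine squeeze_zero_norm' (a := fun N : ℕ => 2 * C * ‖Q ^ N * z‖) ?_ ?_
    · filter_upwards [hev] with N hN
      simpa [ha0] using tsum_shift_bound hC hN
    · simpa using hwn.const_mul (2 * C)
  have := key.add_const 1
  simpa using this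

lemma euler1 {Q : ℂ} (hQ : ‖Q‖ < 1) (hne : ∀ n, qp Q Q n ≠ 0) (hInf : qpInf Q Q ≠ 0)
    {z : ℂ} (hz : ‖z‖ < 1) :
    ∑' n : ℕ, z ^ n / qp Q Q n = (qpInf z Q)⁻¹ := by
  obtain ⟨C, hC0, hC⟩ := inv_qp_bound hQ hne hInf
  set a : ℕ → ℂ := fun n => (qp Q Q n)⁻¹ with ha
  have hCa : ∀ n, ‖a n‖ ≤ C := hC
  have ha0 : a 0 = 1 := by simp [ha, qp]
  have hF : ∀ w : ℂ, (∑' n, a n * w ^ n) = ∑' n, w ^ n / qp Q Q n := fun w =>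
    tsum_congr fun n => by rw [div_eq_mul_inv, mul_comm]
  have hfe : ∀ w : ℂ, ‖w‖ < 1 →
      (∑' n, a n * w ^ n) * (1 - w) = ∑' n, a n * (Q * w) ^ n := by
    intro w hw
    have hs1 : Summable fun n => a n * w ^ n := sum_summable' hCa hw
    have hw2 : ‖Q * w‖ < 1 := by
      rw [norm_mul]
      exact lt_of_le_of_lt (mul_le_of_le_one_left (norm_nonneg w) hQ.le) hw
    have hs2 : Summable fun n => a n * (Q * w) ^ n := sum_summable' hCa hw2
    have key : (∑' n, (a n * w ^ n - a n * (Q * w) ^ n)) = w * ∑' n, a n * w ^ n := by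
      rw [Summable.tsum_eq_zero_add (hs1.sub hs2)]
      simp only [pow_zero, mul_one, sub_self, zero_add]
      rw [← tsum_mul_left]
      apply tsum_congr; intro n
      have h1 : qp Q Q (n + 1) = qp Q Q n * (1 - Q ^ (n + 1)) := by
        rw [qp_succ, ← pow_succ']
      have h2 : (1 : ℂ) - Q ^ (n + 1) ≠ 0 := one_sub_pow_ne hne n
      have h3 : a (n + 1) = a n * (1 - Q ^ (n + 1))⁻¹ := by
        rw [ha]; simp only [h1, mul_inv]
      rw [h3, mul_pow]
      have h4 : (Q * w) ^ (n + 1) = Q ^ (n + 1) * w ^ (n + 1) := mul_pow _ _ _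
      field_simp
      ring
    have hsub := Summable.tsum_sub hs1 hs2
    rw [key] at hsub
    linear_combination -hsub
  have hiter : ∀ N : ℕ, (∑' n, a n * z ^ n) * qp z Q N = ∑' n, a n * (Q ^ N * z) ^ n := by
    intro N
    induction N with
    | zero => simp [qp]
    | succ N ih =>
      rw [qp_succ, ← mul_assoc, ih]
      have hw : ‖Q ^ N * z‖ < 1 := by
        rw [norm_mul, norm_pow]
        exact lt_of_le_of_lt
          (mul_le_of_le_one_left (norm_nonneg z) (pow_le_one₀ (norm_nonneg Q) hQ.le)) hz
      have hstep := hfe (Q ^ N * z) hw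
      rw [show (1 : ℂ) - z * Q ^ N = 1 - Q ^ N * z by ring, hstep]
      apply tsum_congr; intro n
      congr 2
      ring
  have hlim1 : Tendsto (fun N => ∑' n, a n * (Q ^ N * z) ^ n) atTop
      (𝓝 ((∑' n, a n * z ^ n) * qpInf z Q)) :=
    (Tendsto.congr hiter ((tendsto_qp hQ z).const_mul _))
  have heq : (∑' n, a n * z ^ n) * qpInf z Q = 1 :=
    tendsto_nhds_unique hlim1 (tendsto_tsum_one hCa ha0 hQ)
  rw [← hF z]
  exact eq_inv_of_mul_eq_one_left (by linear_combination heq)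

lemma euler2 {Q : ℂ} (hQ : ‖Q‖ < 1) (hne : ∀ n, qp Q Q n ≠ 0) (hInf : qpInf Q Q ≠ 0)
    {z : ℂ} (hz : ‖z‖ < 1) :
    ∑' n : ℕ, (-1) ^ n * Q ^ (n.choose 2) * z ^ n / qp Q Q n = qpInf z Q := by
  obtain ⟨C, hC0, hC⟩ := inv_qp_bound hQ hne hInf
  set a : ℕ → ℂ := fun n => (-1) ^ n * Q ^ (n.choose 2) * (qp Q Q n)⁻¹ with ha
  have hCa : ∀ n, ‖a n‖ ≤ C := by
    intro n
    rw [ha]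
    simp only [norm_mul, norm_pow, norm_neg, norm_one, one_pow, one_mul]
    calc ‖Q‖ ^ n.choose 2 * ‖(qp Q Q n)⁻¹‖ ≤ 1 * ‖(qp Q Q n)⁻¹‖ := by
          apply mul_le_mul_of_nonneg_right (pow_le_one₀ (norm_nonneg Q) hQ.le) (norm_nonneg _)
      _ ≤ C := by rw [one_mul]; exact hC n
  have ha0 : a 0 = 1 := by simp [ha, qp]
  have hfe : ∀ w : ℂ, ‖w‖ < 1 →
      (∑' n, a n * w ^ n) = (1 - w) * ∑' n, a n * (Q * w) ^ n := by
    intro w hw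
    have hs1 : Summable fun n => a n * w ^ n := sum_summable' hCa hw
    have hw2 : ‖Q * w‖ < 1 := by
      rw [norm_mul]
      exact lt_of_le_of_lt (mul_le_of_le_one_left (norm_nonneg w) hQ.le) hw
    have hs2 : Summable fun n => a n * (Q * w) ^ n := sum_summable' hCa hw2
    have key : (∑' n, (a n * w ^ n - a n * (Q * w) ^ n)) = -w * ∑' n, a n * (Q * w) ^ n := by
      rw [Summable.tsum_eq_zero_add (hs1.sub hs2)]
      simp only [pow_zero, mul_one, sub_self, zero_add]
      rw [← tsum_mul_left]
      apply tsum_congr; intro n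
      have h1 : qp Q Q (n + 1) = qp Q Q n * (1 - Q ^ (n + 1)) := by
        rw [qp_succ, ← pow_succ']
      have h2 : (1 : ℂ) - Q ^ (n + 1) ≠ 0 := one_sub_pow_ne hne n
      have hch : (n + 1).choose 2 = n.choose 2 + n := by
        rw [Nat.choose_succ_succ]
        simp [Nat.choose_one_right, Nat.add_comm]
      have h5 : ((qp Q Q (n + 1) : ℂ))⁻¹ = (qp Q Q n)⁻¹ * (1 - Q ^ (n + 1))⁻¹ := by
        rw [h1, mul_inv]
      simp only [ha]
      rw [hch, h5]
      field_simp [hne n, h2]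
      ring
    have hsub := Summable.tsum_sub hs1 hs2
    rw [key] at hsub
    linear_combination -hsub
  have hiter : ∀ N : ℕ, (∑' n, a n * z ^ n) = qp z Q N * ∑' n, a n * (Q ^ N * z) ^ n := by
    intro N
    induction N with
    | zero => simp [qp]
    | succ N ih =>
      rw [qp_succ]
      have hw : ‖Q ^ N * z‖ < 1 := by
        rw [norm_mul, norm_pow]
        exact lt_of_le_of_lt
          (mul_le_of_le_one_left (norm_nonneg z) (pow_le_one₀ (norm_nonneg Q) hQ.le)) hz
      have hstep := hfe (Q ^ N * z) hw
      rw [ih, hstep]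
      rw [show (1 : ℂ) - z * Q ^ N = 1 - Q ^ N * z by ring]
      rw [show (∑' n, a n * (Q * (Q ^ N * z)) ^ n) = ∑' n, a n * (Q ^ (N + 1) * z) ^ n from
        tsum_congr fun n => by rw [show Q * (Q ^ N * z) = Q ^ (N + 1) * z by ring]]
      ring
  have hlim1 : Tendsto (fun N => qp z Q N * ∑' n, a n * (Q ^ N * z) ^ n) atTop
      (𝓝 (qpInf z Q * 1)) :=
    (tendsto_qp hQ z).mul (tendsto_tsum_one hCa ha0 hQ)
  have heq : (∑' n, a n * z ^ n) = qpInf z Q * 1 :=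
    tendsto_nhds_unique tendsto_const_nhds (Tendsto.congr (fun N => (hiter N).symm) hlim1)
  rw [mul_one] at heq
  rw [← heq]
  apply tsum_congr; intro n
  rw [ha, div_eq_mul_inv]
  ring

lemma choose_aux (k : ℕ) : k.choose 2 + k = k * (k + 1) / 2 := by
  have hh : (k + 1).choose 2 = k.choose 2 + k := by
    rw [Nat.choose_succ_succ, Nat.choose_one_right, Nat.add_comm]
  rw [← hh, Nat.choose_two_right]
  simp [Nat.mul_comm]

lemma le_triangle (k : ℕ) : k ≤ k * (k + 1) / 2 := by
  apply (Nat.le_div_iff_mul_le (by norm_num)).mpr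
  rcases k with _ | m
  · simp
  · exact Nat.mul_le_mul_left _ (by omega)


set_option maxHeartbeats 1000000 in
/-- bibasic generalization of Entry 1.4.11. -/
theorem entry_1_4_11_bibasic (q h t : ℂ)
    (hqh : ‖q ^ h‖ < 1) (hqt : ‖q ^ t‖ < 1)
    (hqht : ‖q ^ (h * t)‖ < 1)
    (hqt2 : ‖(q ^ t) ^ 2‖ < 1)
    (h1 : ∀ j : ℕ, qp (q ^ t) (q ^ t) j ≠ 0)
    (h2 : ∀ j : ℕ, qpc (q ^ h) (q ^ h) (q ^ (h * t)) j ≠ 0)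
    (h3 : ∀ j : ℕ, qpInf (q ^ h * (q ^ (h * t)) ^ j) (q ^ h) ≠ 0)
    (h4 : qpInf (q ^ t) (q ^ t) ≠ 0)
    (h5 : qpInf (q ^ h) (q ^ h) ≠ 0)
    (h6 : ∀ k : ℕ, qp (q ^ h) (q ^ h) k ≠ 0)
    (h7 : ∀ k : ℕ, qpInf (q ^ t * q ^ t * (q ^ (h * t)) ^ k) (q ^ t) ≠ 0) :
    ∑' j : ℕ, (q ^ t) ^ (2 * j) /
        (qp (q ^ t) (q ^ t) j * qpc (q ^ h) (q ^ h) (q ^ (h * t)) j)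
    = (1 / (qpInf (q ^ t) (q ^ t) * qpInf (q ^ h) (q ^ h))) *
      ∑' k : ℕ, (qpc1 (q ^ t) (q ^ t) (q ^ (h * t)) k / qp (q ^ h) (q ^ h) k) *
        (-1 : ℂ) ^ k * (q ^ h) ^ (k * (k + 1) / 2) := by
  set a := q ^ t with hadef
  set b := q ^ h with hbdef
  set c := q ^ (h * t) with hcdef
  have ha : ‖a‖ < 1 := by exact hqt
  have hb : ‖b‖ < 1 := by exact hqh
  have hc : ‖c‖ < 1 := by exact hqht
  have ha2 : ‖a * a‖ < 1 := by
    rw [show a * a = a ^ 2 by ring]; exact hqt2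
  obtain ⟨Ca, hCa0, hCa⟩ := inv_qp_bound ha h1 h4
  obtain ⟨Cb, hCb0, hCb⟩ := inv_qp_bound hb h6 h5
  set K := ‖(qpInf b b)⁻¹‖ with hKdef
  set G : ℕ → ℕ → ℂ := fun j k =>
    ((a * a * c ^ k) ^ j / qp a a j) *
      (((-1) ^ k * b ^ (k * (k + 1) / 2)) / (qp b b k * qpInf b b)) with hGdef
  have hnormG : ∀ j k, ‖G j k‖ ≤ (Ca * ‖a * a‖ ^ j) * ((Cb * K) * ‖b‖ ^ k) := by
    intro j k
    have f1 : ‖(a * a * c ^ k) ^ j / qp a a j‖ ≤ Ca * ‖a * a‖ ^ j := by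
      rw [div_eq_mul_inv, norm_mul, norm_pow]
      have hle : ‖a * a * c ^ k‖ ≤ ‖a * a‖ := by
        rw [norm_mul, norm_pow]
        exact mul_le_of_le_one_right (norm_nonneg _) (pow_le_one₀ (norm_nonneg c) hc.le)
      calc ‖a * a * c ^ k‖ ^ j * ‖(qp a a j)⁻¹‖ ≤ ‖a * a‖ ^ j * Ca :=
            mul_le_mul (pow_le_pow_left₀ (norm_nonneg _) hle j) (hCa j)
              (norm_nonneg _) (by positivity)
        _ = Ca * ‖a * a‖ ^ j := by ring
    have f2 : ‖((-1 : ℂ) ^ k * b ^ (k * (k + 1) / 2)) / (qp b b k * qpInf b b)‖ ≤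
        (Cb * K) * ‖b‖ ^ k := by
      rw [div_eq_mul_inv, norm_mul, norm_mul, norm_pow, norm_pow, norm_neg, norm_one,
        one_pow, one_mul, mul_inv, norm_mul]
      calc ‖b‖ ^ (k * (k + 1) / 2) * (‖(qp b b k)⁻¹‖ * ‖(qpInf b b)⁻¹‖)
          ≤ ‖b‖ ^ k * (Cb * K) := by
            apply mul_le_mul _ _ (by positivity) (by positivity)
            · exact pow_le_pow_of_le_one (norm_nonneg b) hb.le (le_triangle k)
            · exact mul_le_mul_of_nonneg_right (hCb k) (norm_nonneg _)
        _ = (Cb * K) * ‖b‖ ^ k := by ring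
    calc ‖G j k‖ = ‖(a * a * c ^ k) ^ j / qp a a j‖ *
          ‖((-1 : ℂ) ^ k * b ^ (k * (k + 1) / 2)) / (qp b b k * qpInf b b)‖ := by
          simp only [hGdef]; rw [norm_mul]
      _ ≤ (Ca * ‖a * a‖ ^ j) * ((Cb * K) * ‖b‖ ^ k) :=
          mul_le_mul f1 f2 (norm_nonneg _) (by positivity)
  have hsum : Summable (Function.uncurry G) := by
    have hs1 : Summable (fun j : ℕ => Ca * ‖a * a‖ ^ j) :=
      (summable_geometric_of_lt_one (norm_nonneg _) ha2).mul_left Ca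
    have hs2 : Summable (fun k : ℕ => (Cb * K) * ‖b‖ ^ k) :=
      (summable_geometric_of_lt_one (norm_nonneg b) hb).mul_left (Cb * K)
    have hsb : Summable (fun p : ℕ × ℕ => (Ca * ‖a * a‖ ^ p.1) * ((Cb * K) * ‖b‖ ^ p.2)) :=
      hs1.mul_of_nonneg hs2 (fun j => by positivity) (fun k => by positivity)
    exact Summable.of_norm_bounded hsb (fun p => hnormG p.1 p.2)
  have hLHS : ∀ j : ℕ, a ^ (2 * j) / (qp a a j * qpc b b c j) = ∑' k, G j k := by
    intro j
    have hzj : ‖b * c ^ j‖ < 1 := by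
      rw [norm_mul, norm_pow]
      exact lt_of_le_of_lt
        (mul_le_of_le_one_right (norm_nonneg b) (pow_le_one₀ (norm_nonneg c) hc.le)) hb
    have he2 := euler2 hb h6 h5 hzj
    have hGrow : ∀ k, G j k = ((-1) ^ k * b ^ (k.choose 2) * (b * c ^ j) ^ k / qp b b k) *
        (a ^ (2 * j) / (qp a a j * qpInf b b)) := by
      intro k
      simp only [hGdef]
      rw [show k * (k + 1) / 2 = k.choose 2 + k from (choose_aux k).symm]
      rw [div_mul_div_comm, div_mul_div_comm]
      rw [div_eq_div_iff (by exact mul_ne_zero (h1 j) (mul_ne_zero (h6 k) h5))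
        (by exact mul_ne_zero (h6 k) (mul_ne_zero (h1 j) h5))]
      ring
    rw [tsum_congr hGrow, tsum_mul_right, he2]
    rw [show qpc b b c j = qpInf b b / qpInf (b * c ^ j) b from rfl]
    have h3' := h3 j
    field_simp
  have hRHS : ∀ k : ℕ, (qpc1 a a c k / qp b b k) * (-1) ^ k * b ^ (k * (k + 1) / 2)
      = (qpInf a a * qpInf b b) * ∑' j, G j k := by
    intro k
    have hzk : ‖a * a * c ^ k‖ < 1 := by
      rw [norm_mul, norm_pow]
      exact lt_of_le_of_lt
        (mul_le_of_le_one_right (norm_nonneg _) (pow_le_one₀ (norm_nonneg c) hc.le)) ha2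
    have he1 := euler1 ha h1 h4 hzk
    rw [show (∑' j, G j k) = (∑' j, (a * a * c ^ k) ^ j / qp a a j) *
        (((-1) ^ k * b ^ (k * (k + 1) / 2)) / (qp b b k * qpInf b b)) from tsum_mul_right, he1]
    rw [show qpc1 a a c k = qpInf a a / qpInf (a * a * c ^ k) a from rfl]
    have h7' := h7 k
    have h6' := h6 k
    field_simp
  calc ∑' j : ℕ, a ^ (2 * j) / (qp a a j * qpc b b c j)
      = ∑' j, ∑' k, G j k := tsum_congr hLHS
    _ = ∑' k, ∑' j, G j k := (Summable.tsum_comm hsum).symm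
    _ = ∑' k, (1 / (qpInf a a * qpInf b b)) *
          ((qpc1 a a c k / qp b b k) * (-1) ^ k * b ^ (k * (k + 1) / 2)) := by
        apply tsum_congr; intro k
        rw [hRHS k, one_div, inv_mul_cancel_left₀ (mul_ne_zero h4 h5)]
    _ = (1 / (qpInf a a * qpInf b b)) *
          ∑' k, (qpc1 a a c k / qp b b k) * (-1) ^ k * b ^ (k * (k + 1) / 2) := tsum_mul_left
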